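/- For a connectable vertex x of S(n,k) with at least two blocks and its unique connector partner y in U_p, the vertex τ(y) defined by the case distinction (σ^{−2}(y) if γ' > 1; σ(y) if γ' = 1 and β > 2; σ^{γ+1}(y) if γ' = 1 and β = 2) is again connectable, and the block-gap profile P(τ(y)) is lexicographically strictly smaller than P(x). -/

import Mathlib

/-- Cyclic right shift of a bitstring of length `n` by one position: `σ(x)_i = x_{i-1}`. -/
def shift {n : ℕ} (x : ZMod n → Bool) : ZMod n → Bool := fun i => x (i - 1)

/-- Cyclic left shift, i.e. `σ⁻¹`: `σ⁻¹(x)_i = x_{i+1}`. -/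
def unshift {n : ℕ} (x : ZMod n → Bool) : ZMod n → Bool := fun i => x (i + 1)

/-- A vertex of the Schrijver graph `S(n,k)` in bitstring form: a binary string of length `n`
with exactly `k` ones and no two ones cyclically adjacent. -/
def IsSchrijverVertex (n k : ℕ) (x : ZMod n → Bool) : Prop :=
  Set.ncard {i : ZMod n | x i = true} = k ∧ ∀ i : ZMod n, x i = true → x (i + 1) = false

/-- Adjacency in the (Schrijver/Kneser) graph: the sets of 1-positions are disjoint
(and the strings are distinct). -/
def SAdj {n : ℕ} (x y : ZMod n → Bool) : Prop :=
  x ≠ y ∧ ∀ i : ZMod n, ¬(x i = true ∧ y i = true)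

/-- The necklace of `x`: the set of all cyclic shifts of `x`. -/
def neck {n : ℕ} (x : ZMod n → Bool) : Set (ZMod n → Bool) :=
  {y | ∃ i : ℕ, shift^[i] x = y}

/-- `(x, y)` is a connector with the glider push at position `i`: `x` and `σ⁻¹(y)` agree
outside the three cyclically consecutive positions `i, i+1, i+2`, where `x` reads `1,0,–`
(with `i+2` unmatched in `x`) and `σ⁻¹(y)` reads `–,1,0` (with `i` unmatched in `σ⁻¹(y)`). -/
def ConnAt {n : ℕ} (i : ZMod n) (x y : ZMod n → Bool) : Prop :=
  x i = true ∧ x (i + 1) = false ∧ x (i + 2) = false ∧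
  unshift y i = false ∧ unshift y (i - 1) = false ∧
  unshift y (i + 1) = true ∧ unshift y (i + 2) = false ∧
  ∀ j : ZMod n, j ≠ i → j ≠ i + 1 → j ≠ i + 2 → x j = unshift y j

/-- `(x,y)` is a connector (at some position). -/
def Conn {n : ℕ} (x y : ZMod n → Bool) : Prop := ∃ i : ZMod n, ConnAt i x y

/-- Position `i` is matched in `x` iff `x_i = 1` or `x_{i-1} = 1`. -/
def matchedB {n : ℕ} (x : ZMod n → Bool) (i : ZMod n) : Bool := x i || x (i - 1)

/-- Run-length encoding of a list of booleans. -/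
def rle : List Bool → List (Bool × ℕ)
  | [] => []
  | b :: l =>
    match rle l with
    | [] => [(b, 1)]
    | (c, m) :: t => if b = c then (c, m + 1) :: t else (b, 1) :: (c, m) :: t

/-- The profile `L(x,q) = L(σ^{-q}(x))`: the lengths of blocks (runs of matched positions,
recorded with a negative sign) and gaps (runs of unmatched positions) of the string
`σ^{-q}(x)` read from right to left; position `j ∈ {1,…,n}` of `σ^{-q}(x)` is matched in
`σ^{-q}(x)` iff position `j + q` is matched in `x`. -/
def profileFrom (n : ℕ) (x : ZMod n → Bool) (q : ZMod n) : List ℤ :=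
  ((rle (List.ofFn fun i : Fin n =>
      matchedB x (((i : ℕ) : ZMod n) + 1 + q))).map
    fun bm => if bm.1 then -(bm.2 : ℤ) else (bm.2 : ℤ)).reverse

/-- `γ'`: the length of the gap immediately to the right of position `p+1` in `x`
(for a connectable `x`, positions `p+2, …, p+1+γ'` are unmatched and `p+2+γ'` is matched). -/
noncomputable def gapR (n : ℕ) (x : ZMod n → Bool) (p : ZMod n) : ℕ :=
  sInf {t : ℕ | matchedB x (p + 2 + (t : ZMod n)) = true}

/-- `β'`: the length of the block immediately to the right of that gap. -/
noncomputable def blkR (n : ℕ) (x : ZMod n → Bool) (p : ZMod n) : ℕ :=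
  sInf {t : ℕ | matchedB x (p + 2 + (gapR n x p : ZMod n) + (t : ZMod n)) = false}

/-- `P(x) = L(x, p+1+γ'+β')`: the block/gap profile of a connectable vertex `x`, read from
right to left starting at the first block strictly to the right of position `p+1`. -/
noncomputable def Pprof (n : ℕ) (x : ZMod n → Bool) (p : ZMod n) : List ℤ :=
  profileFrom n x (p + 1 + (gapR n x p : ZMod n) + (blkR n x p : ZMod n))

lemma rle_cons_of_eq {l : List Bool} {c : Bool} {m : ℕ} {t : List (Bool × ℕ)}
    (h : rle l = (c, m) :: t) (b : Bool) :
    rle (b :: l) = if b = c then (c, m + 1) :: t else (b, 1) :: (c, m) :: t := by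
  simp only [rle, h]

lemma rle_cons (b : Bool) (l : List Bool) : ∃ m t, rle (b :: l) = (b, m) :: t := by
  rcases h : rle l with _ | ⟨⟨c, m⟩, t⟩
  · exact ⟨1, [], by simp [rle, h]⟩
  · by_cases hbc : b = c
    · exact ⟨m + 1, t, by subst hbc; rw [rle_cons_of_eq h, if_pos rfl]⟩
    · exact ⟨1, (c, m) :: t, by rw [rle_cons_of_eq h, if_neg hbc]⟩

lemma rle_append : ∀ (u v : List Bool) (a c : Bool), u.getLast? = some a →
    v.head? = some c → a ≠ c → rle (u ++ v) = rle u ++ rle v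
  | [], _, _, _ => by simp
  | [x], v, a, c => by
    intro hu hv hac
    simp only [List.getLast?_singleton, Option.some.injEq] at hu
    subst hu
    rcases v with _ | ⟨d, v'⟩
    · simp at hv
    · simp only [List.head?_cons, Option.some.injEq] at hv
      obtain ⟨m, t, h⟩ := rle_cons d v'
      have e : rle ([x] ++ d :: v') = rle (x :: d :: v') := rfl
      have hxd : x ≠ d := by rw [← hv] at hac; simpa using hac
      rw [e, rle_cons_of_eq h, if_neg hxd]
      simp only [rle]
      exact h.symm ▸ rfl
  | x :: y :: u'', v, a, c => by
    intro hu hv hac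
    rw [List.getLast?_cons_cons] at hu
    have IH := rle_append (y :: u'') v a c hu hv hac
    obtain ⟨m', t', h'⟩ := rle_cons y u''
    have hIH2 : rle (y :: (u'' ++ v)) = (y, m') :: (t' ++ rle v) := by
      have : (y :: u'') ++ v = y :: (u'' ++ v) := rfl
      rw [this] at IH
      rw [IH, h']; rfl
    have e1 : x :: y :: u'' ++ v = x :: (y :: (u'' ++ v)) := rfl
    rw [e1, rle_cons_of_eq hIH2, rle_cons_of_eq h']
    by_cases hxy : x = y
    · rw [if_pos hxy, if_pos hxy]; rfl
    · rw [if_neg hxy, if_neg hxy]; rfl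

lemma rle_replicate (b : Bool) : ∀ (c : ℕ), 1 ≤ c → rle (List.replicate c b) = [(b, c)]
  | 1, _ => by simp [rle]
  | (c+2), _ => by
    have ih := rle_replicate b (c+1) (by omega)
    rw [List.replicate_succ (n := c+1), rle_cons_of_eq ih, if_pos rfl]

lemma ofFn_congrN (n m : ℕ) (h : n = m) (F : ℕ → Bool) :
    (List.ofFn fun i : Fin n => F i) = (List.ofFn fun i : Fin m => F i) := by subst h; rfl

lemma replicate_getLast? (c : ℕ) (hc : 1 ≤ c) (b : Bool) :
    (List.replicate c b).getLast? = some b := by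
  cases c with
  | zero => omega
  | succ c => rw [List.replicate_succ']; exact List.getLast?_concat

lemma replicate_head?_append (c : ℕ) (hc : 1 ≤ c) (b : Bool) (v : List Bool) :
    (List.replicate c b ++ v).head? = some b := by
  cases c with
  | zero => omega
  | succ c => simp [List.replicate_succ]

lemma replicate_head? (c : ℕ) (hc : 1 ≤ c) (b : Bool) :
    (List.replicate c b).head? = some b := by
  cases c with
  | zero => omega
  | succ c => simp [List.replicate_succ]

lemma profile_two_runs (n : ℕ) (x : ZMod n → Bool) (q : ZMod n) (a b : ℕ)
    (ha : 1 ≤ a) (hb : 1 ≤ b) (hab : a + b < n)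
    (hblock : ∀ s : ℕ, s < b → matchedB x (q - (s : ZMod n)) = true)
    (hgap : ∀ s : ℕ, s < a → matchedB x (q - (b : ZMod n) - (s : ZMod n)) = false)
    (hprev : matchedB x (q - (b : ZMod n) - (a : ZMod n)) = true) :
    ∃ r, profileFrom n x q = -(b : ℤ) :: (a : ℤ) :: r := by
  set m := n - a - b with hm
  have h1m : 1 ≤ m := by omega
  set F : ℕ → Bool := fun i => matchedB x ((i : ZMod n) + 1 + q) with hF
  have hmz : ((m : ℕ) : ZMod n) = - ((a : ℕ) : ZMod n) - (b : ZMod n) := by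
    rw [hm, Nat.cast_sub (by omega), Nat.cast_sub (by omega), ZMod.natCast_self]
    ring
  -- values in the gap part
  have hgapF : ∀ s : ℕ, s < a → F (m + s) = false := by
    intro s hs
    have e1 : ((a - 1 - s : ℕ) : ZMod n) = (a : ZMod n) - 1 - (s : ZMod n) := by
      rw [Nat.sub_sub, Nat.cast_sub (by omega : 1 + s ≤ a)]
      push_cast; ring
    have e2 : ((m + s : ℕ) : ZMod n) + 1 + q
        = q - (b : ZMod n) - ((a - 1 - s : ℕ) : ZMod n) := by
      rw [Nat.cast_add, hmz, e1]; ring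
    show matchedB x (((m + s : ℕ) : ZMod n) + 1 + q) = false
    rw [e2]; exact hgap _ (by omega)
  have hblkF : ∀ s : ℕ, s < b → F (m + (a + s)) = true := by
    intro s hs
    have e1 : ((b - 1 - s : ℕ) : ZMod n) = (b : ZMod n) - 1 - (s : ZMod n) := by
      rw [Nat.sub_sub, Nat.cast_sub (by omega : 1 + s ≤ b)]
      push_cast; ring
    have e2 : ((m + (a + s) : ℕ) : ZMod n) + 1 + q
        = q - ((b - 1 - s : ℕ) : ZMod n) := by
      push_cast
      rw [hmz, e1]; ring
    show matchedB x (((m + (a + s) : ℕ) : ZMod n) + 1 + q) = true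
    rw [e2]; exact hblock _ (by omega)
  have hlastF : F (m - 1) = true := by
    have e2 : ((m - 1 : ℕ) : ZMod n) + 1 + q
        = q - (b : ZMod n) - (a : ZMod n) := by
      have e3 : ((m - 1 : ℕ) : ZMod n) + 1 = ((m : ℕ) : ZMod n) := by
        have h4 : (m - 1) + 1 = m := by omega
        calc ((m - 1 : ℕ) : ZMod n) + 1 = (((m - 1) + 1 : ℕ) : ZMod n) := by push_cast; ring
          _ = ((m : ℕ) : ZMod n) := by rw [h4]
      rw [e3, hmz]; ring
    show matchedB x (((m - 1 : ℕ) : ZMod n) + 1 + q) = true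
    rw [e2]; exact hprev
  have hsplit : (List.ofFn fun i : Fin n => F i)
      = (List.ofFn fun i : Fin m => F i) ++
        (List.replicate a false ++ List.replicate b true) := by
    apply List.ext_getElem (by simp; omega)
    intro i h1 h2
    have h1' : i < n := by simpa using h1
    rw [List.getElem_ofFn]
    by_cases hi1 : i < m
    · rw [List.getElem_append_left (by simpa using hi1)]
      simp
    · rw [List.getElem_append_right (by simpa using hi1)]
      by_cases hi2 : i - m < a
      · rw [List.getElem_append_left (by simpa using hi2)]
        rw [List.getElem_replicate]
        have := hgapF (i - m) hi2
        rw [show m + (i - m) = i by omega] at this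
        simpa using this
      · rw [List.getElem_append_right (by simpa using hi2)]
        rw [List.getElem_replicate]
        have hlt : i - m - a < b := by simp at h2; omega
        have := hblkF (i - m - a) hlt
        rw [show m + (a + (i - m - a)) = i by omega] at this
        simpa using this
  have hlast : (List.ofFn fun i : Fin m => F i).getLast? = some true := by
    have hne : (List.ofFn fun i : Fin m => F i) ≠ [] := by simp; omega
    rw [List.getLast?_eq_getLast hne, List.getLast_eq_getElem]
    simp [hlastF]
  have hrle1 : rle (List.replicate a false ++ List.replicate b true)
      = [(false, a), (true, b)] := by
    rw [rle_append _ _ false true (replicate_getLast? a ha false)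
      (replicate_head? b hb true) (by simp), rle_replicate _ a ha, rle_replicate _ b hb]
    rfl
  have hrle : rle ((List.ofFn fun i : Fin m => F i) ++
      (List.replicate a false ++ List.replicate b true))
      = rle (List.ofFn fun i : Fin m => F i) ++ [(false, a), (true, b)] := by
    rw [rle_append _ _ true false hlast (replicate_head?_append a ha false _) (by simp), hrle1]
  refine ⟨((rle (List.ofFn fun i : Fin m => F i)).map
    fun bm => if bm.1 then -(bm.2 : ℤ) else (bm.2 : ℤ)).reverse, ?_⟩
  have hofn : (List.ofFn fun i : Fin n => matchedB x (((i : ℕ) : ZMod n) + 1 + q))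
      = List.ofFn fun i : Fin n => F i := rfl
  rw [profileFrom, hofn, hsplit, hrle]
  simp

lemma profile_one_run (n : ℕ) (x : ZMod n → Bool) (q : ZMod n) (b : ℕ)
    (hb : 1 ≤ b) (hbn : b < n)
    (hblock : ∀ s : ℕ, s < b → matchedB x (q - (s : ZMod n)) = true)
    (hprev : matchedB x (q - (b : ZMod n)) = false) :
    ∃ r, profileFrom n x q = -(b : ℤ) :: r := by
  set m := n - b with hm
  have h1m : 1 ≤ m := by omega
  set F : ℕ → Bool := fun i => matchedB x ((i : ZMod n) + 1 + q) with hF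
  have hmz : ((m : ℕ) : ZMod n) = - ((b : ℕ) : ZMod n) := by
    rw [hm, Nat.cast_sub (by omega), ZMod.natCast_self]
    ring
  have hblkF : ∀ s : ℕ, s < b → F (m + s) = true := by
    intro s hs
    have e1 : ((b - 1 - s : ℕ) : ZMod n) = (b : ZMod n) - 1 - (s : ZMod n) := by
      rw [Nat.sub_sub, Nat.cast_sub (by omega : 1 + s ≤ b)]
      push_cast; ring
    have e2 : ((m + s : ℕ) : ZMod n) + 1 + q
        = q - ((b - 1 - s : ℕ) : ZMod n) := by
      push_cast
      rw [hmz, e1]; ring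
    show matchedB x (((m + s : ℕ) : ZMod n) + 1 + q) = true
    rw [e2]; exact hblock _ (by omega)
  have hlastF : F (m - 1) = false := by
    have e2 : ((m - 1 : ℕ) : ZMod n) + 1 + q = q - (b : ZMod n) := by
      have e3 : ((m - 1 : ℕ) : ZMod n) + 1 = ((m : ℕ) : ZMod n) := by
        have h4 : (m - 1) + 1 = m := by omega
        calc ((m - 1 : ℕ) : ZMod n) + 1 = (((m - 1) + 1 : ℕ) : ZMod n) := by push_cast; ring
          _ = ((m : ℕ) : ZMod n) := by rw [h4]
      rw [e3, hmz]; ring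
    show matchedB x (((m - 1 : ℕ) : ZMod n) + 1 + q) = false
    rw [e2]; exact hprev
  have hsplit : (List.ofFn fun i : Fin n => F i)
      = (List.ofFn fun i : Fin m => F i) ++ List.replicate b true := by
    apply List.ext_getElem (by simp; omega)
    intro i h1 h2
    have h1' : i < n := by simpa using h1
    rw [List.getElem_ofFn]
    by_cases hi1 : i < m
    · rw [List.getElem_append_left (by simpa using hi1)]
      simp
    · rw [List.getElem_append_right (by simpa using hi1)]
      rw [List.getElem_replicate]
      have hlt : i - m < b := by omega
      have := hblkF (i - m) hlt
      rw [show m + (i - m) = i by omega] at this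
      simpa using this
  have hlast : (List.ofFn fun i : Fin m => F i).getLast? = some false := by
    have hne : (List.ofFn fun i : Fin m => F i) ≠ [] := by simp; omega
    rw [List.getLast?_eq_getLast hne, List.getLast_eq_getElem]
    simp [hlastF]
  have hrle : rle ((List.ofFn fun i : Fin m => F i) ++ List.replicate b true)
      = rle (List.ofFn fun i : Fin m => F i) ++ [(true, b)] := by
    rw [rle_append _ _ false true hlast (replicate_head?_append b hb true [] ▸ (by
        cases b with
        | zero => omega
        | succ c => simp [List.replicate_succ])) (by simp), rle_replicate _ b hb]
  refine ⟨((rle (List.ofFn fun i : Fin m => F i)).map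
    fun bm => if bm.1 then -(bm.2 : ℤ) else (bm.2 : ℤ)).reverse, ?_⟩
  have hofn : (List.ofFn fun i : Fin n => matchedB x (((i : ℕ) : ZMod n) + 1 + q))
      = List.ofFn fun i : Fin n => F i := rfl
  rw [profileFrom, hofn, hsplit, hrle]
  simp

lemma one_block_contra (n : ℕ) (M : ZMod n → Bool) (q : ZMod n) (a b : ℕ)
    (ha : 1 ≤ a) (hb : 1 ≤ b) (hab : a + b = n)
    (hgap : ∀ s : ℕ, s < a → M (q + (s : ZMod n)) = false)
    (hblk : ∀ t : ℕ, t < b → M (q + (a : ZMod n) + (t : ZMod n)) = true)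
    (hcard : 2 ≤ Set.ncard {i : ZMod n | M i = true ∧ M (i - 1) = false}) : False := by
  haveI : NeZero n := ⟨by omega⟩
  have hset : {i : ZMod n | M i = true ∧ M (i - 1) = false} = {q + (a : ZMod n)} := by
    ext i
    simp only [Set.mem_setOf_eq, Set.mem_singleton_iff]
    constructor
    · rintro ⟨h1, h2⟩
      set c := (i - q).val with hc
      have hcn : c < n := ZMod.val_lt _
      have hic : i = q + (c : ZMod n) := by
        rw [hc, ZMod.natCast_val, ZMod.cast_id]
        ring
      by_cases h3 : c < a
      · rw [hic] at h1
        rw [hgap c h3] at h1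
        simp at h1
      · have h4 : c - a < b := by omega
        by_cases h5 : c = a
        · rw [hic, h5]
        · exfalso
          have h6 : 1 ≤ c - a := by omega
          have h7 : i - 1 = q + (a : ZMod n) + ((c - a - 1 : ℕ) : ZMod n) := by
            rw [hic]
            have : ((c : ℕ) : ZMod n) = (a : ZMod n) + ((c - a - 1 : ℕ) : ZMod n) + 1 := by
              have hceq : a + (c - a - 1) + 1 = c := by omega
              calc ((c : ℕ) : ZMod n) = ((a + (c - a - 1) + 1 : ℕ) : ZMod n) := by rw [hceq]
                _ = (a : ZMod n) + ((c - a - 1 : ℕ) : ZMod n) + 1 := by push_cast; ring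
            rw [this]; ring
          rw [h7, hblk (c - a - 1) (by omega)] at h2
          simp at h2
    · intro h
      subst h
      constructor
      · have := hblk 0 hb
        simpa using this
      · have h7 : q + (a : ZMod n) - 1 = q + ((a - 1 : ℕ) : ZMod n) := by
          rw [Nat.cast_sub (by omega)]
          push_cast
          ring
        rw [h7]
        exact hgap (a - 1) (by omega)
  rw [hset, Set.ncard_singleton] at hcard
  omega

lemma sInf_eq_of_mem_of_not_lt {S : Set ℕ} {m : ℕ} (h1 : m ∈ S)
    (h2 : ∀ t, t < m → t ∉ S) : sInf S = m := by
  refine le_antisymm (Nat.sInf_le h1) ?_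
  by_contra h
  push_neg at h
  exact h2 _ h (Nat.sInf_mem ⟨m, h1⟩)

lemma shift_iter {n : ℕ} : ∀ (m : ℕ) (w : ZMod n → Bool) (i : ZMod n),
    shift^[m] w i = w (i - (m : ℕ)) := by
  intro m
  induction m with
  | zero => intro w i; simp
  | succ m ih =>
    intro w i
    rw [Function.iterate_succ_apply']
    show shift^[m] w (i - 1) = _
    rw [ih]
    congr 1
    push_cast
    ring

/-- for a connectable vertex `x` of `S(n,k)` with at least two blocks and its
unique connector partner `y` in `U_p`, the vertex `τ(y)` (defined as `σ^{-2}(y)` if `γ' > 1`,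
as `σ(y)` if `γ' = 1` and `β > 2`, and as `σ^{γ+1}(y)` if `γ' = 1` and `β = 2`) is again
connectable, and `P(τ(y))` is lexicographically strictly smaller than `P(x)`. -/
theorem tau_connectable_and_lex_decrease (n k : ℕ) (hk : 1 ≤ k) (hn : 2 * k + 1 ≤ n)
    (p : ZMod n) (x y : ZMod n → Bool)
    (hx : IsSchrijverVertex n k x) (hy : IsSchrijverVertex n k y) (hc : ConnAt p x y)
    (hblocks : 2 ≤ Set.ncard {i : ZMod n | matchedB x i = true ∧ matchedB x (i - 1) = false})
    (β γ γ' β' : ℕ)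
    -- `β` is the length of the block of `x` ending at position `p+1`:
    (hβ2 : 2 ≤ β) (hβ : ∀ t : ℕ, t < β → matchedB x (p + 1 - (t : ZMod n)) = true)
    (hβend : matchedB x (p + 1 - (β : ZMod n)) = false)
    -- `γ` is the length of the gap immediately to the left of that block:
    (hγ1 : 1 ≤ γ)
    (hγ : ∀ t : ℕ, t < γ → matchedB x (p + 1 - (β : ZMod n) - (t : ZMod n)) = false)
    (hγend : matchedB x (p + 1 - (β : ZMod n) - (γ : ZMod n)) = true)
    -- `γ'` and `β'` are the lengths of the gap and block immediately to the right:
    (hγ' : γ' = gapR n x p) (hβ' : β' = blkR n x p)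
    (τy : ZMod n → Bool)
    (hτ : τy = if 1 < γ' then unshift (unshift y)
          else if 2 < β then shift y else shift^[γ + 1] y) :
    (τy p = true ∧ τy (p + 1) = false ∧ τy (p + 2) = false) ∧
    List.Lex (· < ·) (Pprof n τy p) (Pprof n x p) := by
  obtain ⟨hxp, hxp1, hxp2, hzp, hzpm1, hzp1, hzp2, hagree⟩ := hc
  set z := unshift y with hzdef
  -- n is at least 5
  haveI : NeZero n := ⟨by omega⟩
  have hk2 : 2 ≤ k := by
    have hsub : {i : ZMod n | matchedB x i = true ∧ matchedB x (i - 1) = false}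
        ⊆ {i : ZMod n | x i = true} := by
      rintro i ⟨h1, h2⟩
      simp only [Set.mem_setOf_eq]
      simp only [matchedB, Bool.or_eq_true, Bool.or_eq_false_iff] at h1 h2
      rcases h1 with h1 | h1
      · exact h1
      · rw [h2.1] at h1; exact absurd h1 (by simp)
    have := Set.ncard_le_ncard hsub (Set.toFinite _)
    rw [hx.1] at this
    omega
  have hn5 : 5 ≤ n := by omega
  have hγ'' : γ' = sInf {t : ℕ | matchedB x (p + 2 + (t : ZMod n)) = true} := hγ'
  have hβ'' : β' = sInf {t : ℕ | matchedB x (p + 2 + ((γ' : ℕ) : ZMod n) + (t : ZMod n)) = false} := by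
    rw [hγ']; exact hβ'
  -- cast toolkit
  have hpeq : ∀ (w : ZMod n) (c d : ℕ), c < n → d < n →
      w + (c : ZMod n) = w + (d : ZMod n) → c = d := by
    intro w c d hcn hdn h
    have h2 : (c : ZMod n) = (d : ZMod n) := add_left_cancel h
    calc c = ((c : ZMod n)).val := (ZMod.val_cast_of_lt hcn).symm
      _ = ((d : ZMod n)).val := by rw [h2]
      _ = d := ZMod.val_cast_of_lt hdn
  have hpeq0 : ∀ c : ℕ, c < n → p + (c : ZMod n) = p → c = 0 := fun c hc h =>
    hpeq p c 0 hc (by omega) (by rw [Nat.cast_zero, add_zero]; exact h)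
  have hpeq1 : ∀ c : ℕ, c < n → p + (c : ZMod n) = p + 1 → c = 1 := fun c hc h =>
    hpeq p c 1 hc (by omega) (by rw [Nat.cast_one]; exact h)
  have hpeq2 : ∀ c : ℕ, c < n → p + (c : ZMod n) = p + 2 → c = 2 := fun c hc h =>
    hpeq p c 2 hc (by omega) (by rw [Nat.cast_ofNat]; exact h)
  have hnc : ∀ c : ℕ, c ≤ n → ((n - c : ℕ) : ZMod n) = -(c : ZMod n) := by
    intro c hc
    rw [Nat.cast_sub hc, ZMod.natCast_self]
    ring
  have hcsub : ∀ c d : ℕ, d ≤ c → ((c - d : ℕ) : ZMod n) = (c : ZMod n) - (d : ZMod n) :=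
    fun c d h => Nat.cast_sub h
  -- basic x facts
  have hxm1 : x (p - 1) = false := by
    by_contra h
    have h1 : x (p - 1) = true := by
      cases hh : x (p - 1) with
      | false => exact absurd hh h
      | true => rfl
    have := hx.2 _ h1
    rw [show p - 1 + 1 = p by ring, hxp] at this
    exact absurd this (by simp)
  have hMp : matchedB x p = true := by simp [matchedB, hxp]
  have hMp1 : matchedB x (p + 1) = true := by
    simp only [matchedB]
    rw [show p + 1 - 1 = p by ring, hxp]
    simp
  have hMp2 : matchedB x (p + 2) = false := by
    simp only [matchedB]
    rw [show p + 2 - 1 = p + 1 by ring, hxp1, hxp2]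
    rfl
  -- gapR of x
  have hSmem : (n - 1) ∈ {t : ℕ | matchedB x (p + 2 + (t : ZMod n)) = true} := by
    show matchedB x _ = true
    rw [hnc 1 (by omega), show p + 2 + -((1:ℕ):ZMod n) = p + 1 by push_cast; ring]
    exact hMp1
  have hγ'mem : matchedB x (p + 2 + (γ' : ZMod n)) = true := by
    rw [hγ'']
    exact Nat.sInf_mem ⟨n - 1, hSmem⟩
  have hγ'lt : ∀ t, t < γ' → matchedB x (p + 2 + (t : ZMod n)) = false := by
    intro t ht
    rw [hγ''] at ht
    have := Nat.notMem_of_lt_sInf ht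
    simpa using this
  have hγ'le : γ' ≤ n - 1 := hγ'' ▸ Nat.sInf_le hSmem
  have hγ'1 : 1 ≤ γ' := by
    by_contra h
    have h0 : γ' = 0 := by omega
    rw [h0] at hγ'mem
    simp only [Nat.cast_zero, add_zero] at hγ'mem
    rw [hMp2] at hγ'mem
    exact absurd hγ'mem (by simp)
  -- blkR of x
  have hTmem : (n - γ') ∈ {t : ℕ | matchedB x (p + 2 + ((γ' : ℕ) : ZMod n) + (t : ZMod n)) = false} := by
    show matchedB x _ = false
    rw [hnc γ' (by omega),
      show p + 2 + ((γ' : ℕ) : ZMod n) + -((γ':ℕ):ZMod n) = p + 2 by ring]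
    exact hMp2
  have hβ'mem : matchedB x (p + 2 + (γ' : ZMod n) + (β' : ZMod n)) = false := by
    have h0 := Nat.sInf_mem ⟨n - γ', hTmem⟩
    rw [← hβ''] at h0
    exact h0
  have hβ'lt : ∀ t, t < β' → matchedB x (p + 2 + (γ' : ZMod n) + (t : ZMod n)) = true := by
    intro t ht
    rw [hβ''] at ht
    have := Nat.notMem_of_lt_sInf ht
    simpa using this
  have hβ'le : β' ≤ n - γ' := hβ'' ▸ Nat.sInf_le hTmem
  have hβ'1 : 1 ≤ β' := by
    by_contra h
    have h0 : β' = 0 := by omega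
    rw [h0] at hβ'mem
    simp only [Nat.cast_zero, add_zero] at hβ'mem
    rw [hγ'mem] at hβ'mem
    exact absurd hβ'mem (by simp)
  -- γ' + β' ≤ n - 2
  have hsum_ne : γ' + β' ≠ n := by
    intro h
    refine one_block_contra n (matchedB x) (p + 2) γ' β' hγ'1 hβ'1 h ?_ ?_ hblocks
    · intro s hs; exact hγ'lt s hs
    · intro t ht; exact hβ'lt t ht
  have hsum_ne1 : γ' + β' ≠ n - 1 := by
    intro h
    have e : p + 2 + (γ' : ZMod n) + (β' : ZMod n) = p + 1 := by
      have : (γ' : ZMod n) + (β' : ZMod n) = ((γ' + β' : ℕ) : ZMod n) := by push_cast; ring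
      rw [add_assoc, this, h, hnc 1 (by omega)]
      push_cast
      ring
    rw [e, hMp1] at hβ'mem
    exact absurd hβ'mem (by simp)
  have hsum : γ' + β' ≤ n - 2 := by
    have : γ' + β' ≤ n := by omega
    omega
  -- profile of x
  have hPx : ∃ r, profileFrom n x (p + 1 + (γ' : ZMod n) + (β' : ZMod n))
      = -(β' : ℤ) :: (γ' : ℤ) :: r := by
    apply profile_two_runs n x _ γ' β' hγ'1 hβ'1 (by omega)
    · intro s hs
      rw [show p + 1 + (γ' : ZMod n) + (β' : ZMod n) - (s : ZMod n)
          = p + 2 + (γ' : ZMod n) + (((β' - 1 - s : ℕ)) : ZMod n) by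
        rw [Nat.sub_sub, hcsub β' (1 + s) (by omega)]; push_cast; ring]
      exact hβ'lt _ (by omega)
    · intro s hs
      rw [show p + 1 + (γ' : ZMod n) + (β' : ZMod n) - (β' : ZMod n) - (s : ZMod n)
          = p + 2 + (((γ' - 1 - s : ℕ)) : ZMod n) by
        rw [Nat.sub_sub, hcsub γ' (1 + s) (by omega)]; push_cast; ring]
      exact hγ'lt _ (by omega)
    · rw [show p + 1 + (γ' : ZMod n) + (β' : ZMod n) - (β' : ZMod n) - (γ' : ZMod n)
          = p + 1 by ring]
      exact hMp1
  -- z facts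
  have hzj : ∀ j : ZMod n, j ≠ p → j ≠ p + 1 → j ≠ p + 2 → z j = x j :=
    fun j h1 h2 h3 => (hagree j h1 h2 h3).symm
  have hzx : ∀ c : ℕ, 3 ≤ c → c < n → z (p + (c : ZMod n)) = x (p + (c : ZMod n)) := by
    intro c h3 hcn
    apply hzj
    · intro h
      exact absurd (hpeq0 c (by omega) h) (by omega)
    · intro h
      exact absurd (hpeq1 c (by omega) h) (by omega)
    · intro h
      exact absurd (hpeq2 c (by omega) h) (by omega)
  have hNfact : ∀ j : ZMod n, j ≠ p → j ≠ p + 2 → matchedB z j = matchedB x j := by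
    intro j h1 h2
    by_cases hj1 : j = p + 1
    · subst hj1
      simp [matchedB, show p + 1 - 1 = p from by ring, hzp1, hzp, hxp1, hxp]
    · by_cases hj3 : j = p + 3
      · subst hj3
        have hz3 : z (p + 3) = x (p + 3) := by
          have e : p + 3 = p + ((3 : ℕ) : ZMod n) := by push_cast; ring
          rw [e, hzx 3 (by omega) (by omega)]
        simp [matchedB, show p + 3 - 1 = p + 2 from by ring, hz3, hzp2, hxp2]
      · have hj1' : j - 1 ≠ p := fun h => hj1 (by linear_combination h)
        have hj2' : j - 1 ≠ p + 1 := fun h => h2 (by linear_combination h)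
        have hj3' : j - 1 ≠ p + 2 := fun h => hj3 (by linear_combination h)
        simp only [matchedB]
        rw [hzj j h1 hj1 h2, hzj (j - 1) hj1' hj2' hj3']
  have hNp : matchedB z p = false := by simp [matchedB, hzp, hzpm1]
  have hNp1 : matchedB z (p + 1) = true := by
    simp [matchedB, show p + 1 - 1 = p from by ring, hzp1]
  have hNp2 : matchedB z (p + 2) = true := by
    simp [matchedB, show p + 2 - 1 = p + 1 from by ring, hzp1]
  have hNblk : ∀ t : ℕ, t < β' → matchedB z (p + 2 + (γ' : ZMod n) + (t : ZMod n)) = true := by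
    intro t ht
    have e : p + 2 + (γ' : ZMod n) + (t : ZMod n) = p + ((2 + γ' + t : ℕ) : ZMod n) := by
      push_cast; ring
    rw [e, hNfact]
    · rw [← e]; exact hβ'lt t ht
    · intro h
      exact absurd (hpeq0 (2 + γ' + t) (by omega) h) (by omega)
    · intro h
      exact absurd (hpeq2 (2 + γ' + t) (by omega) h) (by omega)
  have hNblkend : matchedB z (p + 2 + (γ' : ZMod n) + (β' : ZMod n)) = false := by
    by_cases h : 2 + γ' + β' = n
    · have e : p + 2 + (γ' : ZMod n) + (β' : ZMod n) = p := by
        have h2 : ((2 + γ' + β' : ℕ) : ZMod n) = ((n : ℕ) : ZMod n) := by rw [h]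
        rw [ZMod.natCast_self] at h2
        push_cast at h2
        linear_combination h2
      rw [e]; exact hNp
    · have e : p + 2 + (γ' : ZMod n) + (β' : ZMod n) = p + ((2 + γ' + β' : ℕ) : ZMod n) := by
        push_cast; ring
      rw [e, hNfact]
      · rw [← e]; exact hβ'mem
      · intro hh
        exact absurd (hpeq0 (2 + γ' + β') (by omega) hh) (by omega)
      · intro hh
        exact absurd (hpeq2 (2 + γ' + β') (by omega) hh) (by omega)
  by_cases hcase : 1 < γ'
  -- CASE 1 : γ' > 1, τy = σ⁻²(y)
  · rw [if_pos hcase] at hτ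
    have hτv : ∀ i, τy i = z (i + 1) := fun i => by rw [hτ]; rfl
    have hMτ : ∀ i, matchedB τy i = matchedB z (i + 1) := by
      intro i
      simp only [matchedB]
      rw [hτv, hτv, show i - 1 + 1 = i + 1 - 1 from by ring]
    have hγτ : gapR n τy p = γ' - 1 := by
      show sInf {t : ℕ | matchedB τy (p + 2 + (t : ZMod n)) = true} = γ' - 1
      apply sInf_eq_of_mem_of_not_lt
      · show matchedB τy _ = true
        rw [hMτ, show p + 2 + ((γ' - 1 : ℕ) : ZMod n) + 1 = p + 2 + (γ' : ZMod n) from by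
          rw [hcsub γ' 1 (by omega)]; ring]
        have e : p + 2 + (γ' : ZMod n) = p + ((2 + γ' : ℕ) : ZMod n) := by push_cast; ring
        rw [e, hNfact]
        · rw [← e]; exact hγ'mem
        · intro h
          exact absurd (hpeq0 (2 + γ') (by omega) h) (by omega)
        · intro h
          exact absurd (hpeq2 (2 + γ') (by omega) h) (by omega)
      · intro t ht hmem
        simp only [Set.mem_setOf_eq] at hmem
        rw [hMτ, show p + 2 + (t : ZMod n) + 1 = p + ((2 + (t + 1) : ℕ) : ZMod n) from by
          push_cast; ring] at hmem
        rw [hNfact] at hmem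
        · rw [show p + ((2 + (t + 1) : ℕ) : ZMod n) = p + 2 + ((t + 1 : ℕ) : ZMod n) from by
            push_cast; ring] at hmem
          rw [hγ'lt (t + 1) (by omega)] at hmem
          exact absurd hmem (by simp)
        · intro h
          exact absurd (hpeq0 (2 + (t + 1)) (by omega) h) (by omega)
        · intro h
          exact absurd (hpeq2 (2 + (t + 1)) (by omega) h) (by omega)
    have hbτ : blkR n τy p = β' := by
      show sInf {t : ℕ | matchedB τy (p + 2 + ((gapR n τy p : ℕ) : ZMod n) + (t : ZMod n)) = false} = β'
      rw [hγτ]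
      apply sInf_eq_of_mem_of_not_lt
      · show matchedB τy _ = false
        rw [hMτ, show p + 2 + ((γ' - 1 : ℕ) : ZMod n) + (β' : ZMod n) + 1
            = p + 2 + (γ' : ZMod n) + (β' : ZMod n) from by
          rw [hcsub γ' 1 (by omega)]; ring]
        exact hNblkend
      · intro t ht hmem
        simp only [Set.mem_setOf_eq] at hmem
        rw [hMτ, show p + 2 + ((γ' - 1 : ℕ) : ZMod n) + (t : ZMod n) + 1
            = p + 2 + (γ' : ZMod n) + (t : ZMod n) from by
          rw [hcsub γ' 1 (by omega)]; ring] at hmem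
        rw [hNblk t ht] at hmem
        exact absurd hmem (by simp)
    have hPτ : ∃ r, profileFrom n τy (p + 1 + ((γ' - 1 : ℕ) : ZMod n) + ((β' : ℕ) : ZMod n))
        = -(β' : ℤ) :: ((γ' - 1 : ℕ) : ℤ) :: r := by
      apply profile_two_runs n τy _ (γ' - 1) β' (by omega) hβ'1 (by omega)
      · intro s hs
        rw [hMτ, show p + 1 + ((γ' - 1 : ℕ) : ZMod n) + (β' : ZMod n) - (s : ZMod n) + 1
            = p + 2 + (γ' : ZMod n) + ((β' - 1 - s : ℕ) : ZMod n) from by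
          rw [hcsub γ' 1 (by omega), Nat.sub_sub, hcsub β' (1 + s) (by omega)]
          push_cast; ring]
        exact hNblk _ (by omega)
      · intro s hs
        rw [hMτ, show p + 1 + ((γ' - 1 : ℕ) : ZMod n) + (β' : ZMod n) - (β' : ZMod n)
              - (s : ZMod n) + 1
            = p + 2 + ((γ' - 1 - s : ℕ) : ZMod n) from by
          rw [hcsub γ' 1 (by omega), Nat.sub_sub, hcsub γ' (1 + s) (by omega)]
          push_cast; ring]
        rw [hNfact]
        · exact hγ'lt _ (by omega)
        · intro h
          have h2 : p + ((2 + (γ' - 1 - s) : ℕ) : ZMod n) = p := by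
            push_cast
            linear_combination h
          exact absurd (hpeq0 _ (by omega) h2) (by omega)
        · intro h
          have h2 : p + ((2 + (γ' - 1 - s) : ℕ) : ZMod n) = p + 2 := by
            push_cast
            linear_combination h
          exact absurd (hpeq2 _ (by omega) h2) (by omega)
      · rw [hMτ, show p + 1 + ((γ' - 1 : ℕ) : ZMod n) + (β' : ZMod n) - (β' : ZMod n)
            - ((γ' - 1 : ℕ) : ZMod n) + 1 = p + 2 from by ring]
        exact hNp2
    refine ⟨⟨?_, ?_, ?_⟩, ?_⟩
    · rw [hτv]; exact hzp1
    · rw [hτv, show p + 1 + 1 = p + 2 from by ring]; exact hzp2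
    · rw [hτv, show p + 2 + 1 = p + ((3 : ℕ) : ZMod n) from by push_cast; ring,
        hzx 3 (by omega) (by omega)]
      have h31 := hγ'lt 1 hcase
      rw [show p + 2 + ((1 : ℕ) : ZMod n) = p + ((3 : ℕ) : ZMod n) from by push_cast; ring] at h31
      simp only [matchedB, Bool.or_eq_false_iff] at h31
      exact h31.1
    · unfold Pprof
      rw [hγτ, hbτ, ← hγ', ← hβ']
      obtain ⟨r1, e1⟩ := hPτ
      obtain ⟨r2, e2⟩ := hPx
      rw [e1, e2]
      apply List.Lex.cons
      apply List.Lex.rel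
      have : γ' - 1 < γ' := by omega
      exact_mod_cast this
  -- CASES 2,3 : γ' = 1
  · have hγ'eq : γ' = 1 := by omega
    rw [if_neg hcase] at hτ
    have hNrun : ∀ t : ℕ, t < β' + 2 → matchedB z (p + 1 + (t : ZMod n)) = true := by
      intro t ht
      rcases t with _ | t
      · rw [Nat.cast_zero, add_zero]; exact hNp1
      · rcases t with _ | t
        · rw [show p + 1 + ((1 : ℕ) : ZMod n) = p + 2 from by push_cast; ring]; exact hNp2
        · rw [show p + 1 + ((t + 2 : ℕ) : ZMod n)
              = p + 2 + (γ' : ZMod n) + ((t : ℕ) : ZMod n) from by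
            rw [hγ'eq]; push_cast; ring]
          exact hNblk t (by omega)
    have hNrunEnd : matchedB z (p + 1 + ((β' + 2 : ℕ) : ZMod n)) = false := by
      rw [show p + 1 + ((β' + 2 : ℕ) : ZMod n)
          = p + 2 + (γ' : ZMod n) + ((β' : ℕ) : ZMod n) from by rw [hγ'eq]; push_cast; ring]
      exact hNblkend
    by_cases hcaseb : 2 < β
    -- CASE 2 : γ' = 1, β > 2, τy = σ(y)
    · rw [if_pos hcaseb] at hτ
      have hτv : ∀ i, τy i = z (i - 2) := by
        intro i
        rw [hτ]
        show y (i - 1) = y (i - 2 + 1)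
        congr 1; ring
      have hMτ : ∀ i, matchedB τy i = matchedB z (i - 2) := by
        intro i
        simp only [matchedB]
        rw [hτv, hτv, show i - 1 - 2 = i - 2 - 1 from by ring]
      have hγτ : gapR n τy p = 1 := by
        show sInf {t : ℕ | matchedB τy (p + 2 + (t : ZMod n)) = true} = 1
        apply sInf_eq_of_mem_of_not_lt
        · show matchedB τy _ = true
          rw [hMτ, show p + 2 + ((1 : ℕ) : ZMod n) - 2 = p + 1 from by push_cast; ring]
          exact hNp1
        · intro t ht hmem
          have ht0 : t = 0 := by omega
          subst ht0
          simp only [Set.mem_setOf_eq] at hmem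
          rw [hMτ, show p + 2 + ((0 : ℕ) : ZMod n) - 2 = p from by push_cast; ring,
            hNp] at hmem
          exact absurd hmem (by simp)
      have hbτ : blkR n τy p = β' + 2 := by
        show sInf {t : ℕ | matchedB τy (p + 2 + ((gapR n τy p : ℕ) : ZMod n) + (t : ZMod n)) = false} = β' + 2
        rw [hγτ]
        apply sInf_eq_of_mem_of_not_lt
        · show matchedB τy _ = false
          rw [hMτ, show p + 2 + ((1 : ℕ) : ZMod n) + ((β' + 2 : ℕ) : ZMod n) - 2
              = p + 1 + ((β' + 2 : ℕ) : ZMod n) from by push_cast; ring]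
          exact hNrunEnd
        · intro t ht hmem
          simp only [Set.mem_setOf_eq] at hmem
          rw [hMτ, show p + 2 + ((1 : ℕ) : ZMod n) + (t : ZMod n) - 2
              = p + 1 + (t : ZMod n) from by push_cast; ring,
            hNrun t ht] at hmem
          exact absurd hmem (by simp)
      have hPτ : ∃ r, profileFrom n τy (p + 1 + ((1 : ℕ) : ZMod n) + ((β' + 2 : ℕ) : ZMod n))
          = -((β' + 2 : ℕ) : ℤ) :: r := by
        apply profile_one_run n τy _ (β' + 2) (by omega) (by omega)
        · intro s hs
          rw [hMτ, show p + 1 + ((1 : ℕ) : ZMod n) + ((β' + 2 : ℕ) : ZMod n) - (s : ZMod n) - 2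
              = p + 1 + ((β' + 1 - s : ℕ) : ZMod n) from by
            rw [hcsub (β' + 1) s (by omega)]; push_cast; ring]
          exact hNrun _ (by omega)
        · rw [hMτ, show p + 1 + ((1 : ℕ) : ZMod n) + ((β' + 2 : ℕ) : ZMod n)
              - ((β' + 2 : ℕ) : ZMod n) - 2 = p from by push_cast; ring]
          exact hNp
      refine ⟨⟨?_, ?_, ?_⟩, ?_⟩
      · rw [hτv, show p - 2 = p + ((n - 2 : ℕ) : ZMod n) from by
          rw [hnc 2 (by omega)]; push_cast; ring,
          hzx (n - 2) (by omega) (by omega)]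
        have hb2 := hβ 2 hcaseb
        rw [show p + 1 - ((2 : ℕ) : ZMod n) = p - 1 from by push_cast; ring] at hb2
        simp only [matchedB, Bool.or_eq_true] at hb2
        rcases hb2 with h | h
        · rw [hxm1] at h; exact absurd h (by simp)
        · rw [show p - 1 - 1 = p + ((n - 2 : ℕ) : ZMod n) from by
            rw [hnc 2 (by omega)]; push_cast; ring] at h
          exact h
      · rw [hτv, show p + 1 - 2 = p - 1 from by ring]; exact hzpm1
      · rw [hτv, show p + 2 - 2 = p from by ring]; exact hzp
      · unfold Pprof
        rw [hγτ, hbτ, ← hγ', ← hβ']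
        obtain ⟨r1, e1⟩ := hPτ
        obtain ⟨r2, e2⟩ := hPx
        rw [e1, e2]
        apply List.Lex.rel
        push_cast
        omega
    -- CASE 3 : γ' = 1, β = 2, τy = σ^{γ+1}(y)
    · rw [if_neg hcaseb] at hτ
      have hβeq : β = 2 := by omega
      have hτv : ∀ i, τy i = z (i - ((γ + 2 : ℕ) : ZMod n)) := by
        intro i
        rw [hτ, shift_iter]
        show y _ = y _
        congr 1
        push_cast
        ring
      have hMτ : ∀ i, matchedB τy i = matchedB z (i - ((γ + 2 : ℕ) : ZMod n)) := by
        intro i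
        simp only [matchedB]
        rw [hτv, hτv, show i - 1 - ((γ + 2 : ℕ) : ZMod n)
            = i - ((γ + 2 : ℕ) : ZMod n) - 1 from by ring]
      -- γ ≤ n - 5
      have hx3 : x (p + 3) = true := by
        have h := hγ'mem
        rw [hγ'eq, show p + 2 + ((1 : ℕ) : ZMod n) = p + 3 from by push_cast; ring] at h
        simp only [matchedB, Bool.or_eq_true] at h
        rcases h with h | h
        · exact h
        · rw [show p + 3 - 1 = p + 2 from by ring, hxp2] at h
          exact absurd h (by simp)
      have hM3 : matchedB x (p + 3) = true := by simp [matchedB, hx3]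
      have hM4 : matchedB x (p + 4) = true := by
        simp [matchedB, show p + 4 - 1 = p + 3 from by ring, hx3]
      have hγle : γ ≤ n - 5 := by
        by_contra hcon
        push_neg at hcon
        by_cases h4 : n - 4 < γ
        · have hg := hγ (n - 4) h4
          rw [hβeq, show p + 1 - ((2 : ℕ) : ZMod n) - ((n - 4 : ℕ) : ZMod n) = p + 3 from by
            rw [hnc 4 (by omega)]; push_cast; ring] at hg
          rw [hM3] at hg
          exact absurd hg (by simp)
        · have hg := hγ (n - 5) (by omega)
          rw [hβeq, show p + 1 - ((2 : ℕ) : ZMod n) - ((n - 5 : ℕ) : ZMod n) = p + 4 from by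
            rw [hnc 5 (by omega)]; push_cast; ring] at hg
          rw [hM4] at hg
          exact absurd hg (by simp)
      -- x values on the left gap
      have hgm := hγ (γ - 1) (by omega)
      rw [hβeq, show p + 1 - ((2 : ℕ) : ZMod n) - ((γ - 1 : ℕ) : ZMod n)
          = p - (γ : ZMod n) from by rw [hcsub γ 1 (by omega)]; push_cast; ring] at hgm
      simp only [matchedB, Bool.or_eq_false_iff] at hgm
      have hgE := hγend
      rw [hβeq, show p + 1 - ((2 : ℕ) : ZMod n) - ((γ : ℕ) : ZMod n)
          = p - 1 - (γ : ZMod n) from by push_cast; ring] at hgE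
      simp only [matchedB, Bool.or_eq_true] at hgE
      have hxg2 : x (p - 2 - (γ : ZMod n)) = true := by
        rcases hgE with h | h
        · rw [show p - 1 - (γ : ZMod n) = p - (γ : ZMod n) - 1 from by ring, hgm.2] at h
          exact absurd h (by simp)
        · rw [show p - 1 - (γ : ZMod n) - 1 = p - 2 - (γ : ZMod n) from by ring] at h
          exact h
      -- first conjunct values
      refine ⟨⟨?_, ?_, ?_⟩, ?_⟩
      · rw [hτv, show p - ((γ + 2 : ℕ) : ZMod n) = p + ((n - (γ + 2) : ℕ) : ZMod n) from by
          rw [hnc (γ + 2) (by omega)]; push_cast; ring,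
          hzx (n - (γ + 2)) (by omega) (by omega)]
        rw [show p + ((n - (γ + 2) : ℕ) : ZMod n) = p - 2 - (γ : ZMod n) from by
          rw [hnc (γ + 2) (by omega)]; push_cast; ring]
        exact hxg2
      · rw [hτv, show p + 1 - ((γ + 2 : ℕ) : ZMod n) = p + ((n - (γ + 1) : ℕ) : ZMod n) from by
          rw [hnc (γ + 1) (by omega)]; push_cast; ring,
          hzx (n - (γ + 1)) (by omega) (by omega)]
        rw [show p + ((n - (γ + 1) : ℕ) : ZMod n) = p - (γ : ZMod n) - 1 from by
          rw [hnc (γ + 1) (by omega)]; push_cast; ring]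
        exact hgm.2
      · rw [hτv, show p + 2 - ((γ + 2 : ℕ) : ZMod n) = p + ((n - γ : ℕ) : ZMod n) from by
          rw [hnc γ (by omega)]; push_cast; ring,
          hzx (n - γ) (by omega) (by omega)]
        rw [show p + ((n - γ : ℕ) : ZMod n) = p - (γ : ZMod n) from by
          rw [hnc γ (by omega)]; push_cast; ring]
        exact hgm.1
      · have hγτ : gapR n τy p = γ + 1 := by
          show sInf {t : ℕ | matchedB τy (p + 2 + (t : ZMod n)) = true} = γ + 1
          apply sInf_eq_of_mem_of_not_lt
          · show matchedB τy _ = true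
            rw [hMτ, show p + 2 + ((γ + 1 : ℕ) : ZMod n) - ((γ + 2 : ℕ) : ZMod n)
                = p + 1 from by push_cast; ring]
            exact hNp1
          · intro t ht hmem
            simp only [Set.mem_setOf_eq] at hmem
            rw [hMτ] at hmem
            by_cases ht' : t = γ
            · rw [ht', show p + 2 + ((γ : ℕ) : ZMod n) - ((γ + 2 : ℕ) : ZMod n) = p from by
                push_cast; ring, hNp] at hmem
              exact absurd hmem (by simp)
            · have htγ : t < γ := by omega
              rw [show p + 2 + ((t : ℕ) : ZMod n) - ((γ + 2 : ℕ) : ZMod n)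
                  = p + ((n - (γ - t) : ℕ) : ZMod n) from by
                rw [hnc (γ - t) (by omega), hcsub γ t (by omega)]; push_cast; ring] at hmem
              rw [hNfact] at hmem
              · rw [show p + ((n - (γ - t) : ℕ) : ZMod n)
                    = p + 1 - ((2 : ℕ) : ZMod n) - ((γ - t - 1 : ℕ) : ZMod n) from by
                  rw [hnc (γ - t) (by omega), Nat.sub_sub, hcsub γ (t + 1) (by omega),
                    hcsub γ t (by omega)]
                  push_cast; ring] at hmem
                have := hγ (γ - t - 1) (by omega)
                rw [hβeq] at this
                rw [this] at hmem
                exact absurd hmem (by simp)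
              · intro h
                exact absurd (hpeq0 (n - (γ - t)) (by omega) h) (by omega)
              · intro h
                exact absurd (hpeq2 (n - (γ - t)) (by omega) h) (by omega)
        have hbτ : blkR n τy p = β' + 2 := by
          show sInf {t : ℕ | matchedB τy (p + 2 + ((gapR n τy p : ℕ) : ZMod n) + (t : ZMod n)) = false} = β' + 2
          rw [hγτ]
          apply sInf_eq_of_mem_of_not_lt
          · show matchedB τy _ = false
            rw [hMτ, show p + 2 + ((γ + 1 : ℕ) : ZMod n) + ((β' + 2 : ℕ) : ZMod n)
                - ((γ + 2 : ℕ) : ZMod n) = p + 1 + ((β' + 2 : ℕ) : ZMod n) from by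
              push_cast; ring]
            exact hNrunEnd
          · intro t ht hmem
            simp only [Set.mem_setOf_eq] at hmem
            rw [hMτ, show p + 2 + ((γ + 1 : ℕ) : ZMod n) + (t : ZMod n)
                - ((γ + 2 : ℕ) : ZMod n) = p + 1 + (t : ZMod n) from by push_cast; ring,
              hNrun t ht] at hmem
            exact absurd hmem (by simp)
        have hPτ : ∃ r, profileFrom n τy
            (p + 1 + ((γ + 1 : ℕ) : ZMod n) + ((β' + 2 : ℕ) : ZMod n))
            = -((β' + 2 : ℕ) : ℤ) :: r := by
          apply profile_one_run n τy _ (β' + 2) (by omega) (by omega)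
          · intro s hs
            rw [hMτ, show p + 1 + ((γ + 1 : ℕ) : ZMod n) + ((β' + 2 : ℕ) : ZMod n)
                - (s : ZMod n) - ((γ + 2 : ℕ) : ZMod n)
                = p + 1 + ((β' + 1 - s : ℕ) : ZMod n) from by
              rw [hcsub (β' + 1) s (by omega)]; push_cast; ring]
            exact hNrun _ (by omega)
          · rw [hMτ, show p + 1 + ((γ + 1 : ℕ) : ZMod n) + ((β' + 2 : ℕ) : ZMod n)
                - ((β' + 2 : ℕ) : ZMod n) - ((γ + 2 : ℕ) : ZMod n) = p from by
              push_cast; ring]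
            exact hNp
        unfold Pprof
        rw [hγτ, hbτ, ← hγ', ← hβ']
        obtain ⟨r1, e1⟩ := hPτ
        obtain ⟨r2, e2⟩ := hPx
        rw [e1, e2]
        apply List.Lex.rel
        push_cast
        omega
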